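/- Let G be a finite simple graph on n vertices with minimum degree δ, and let μ₁ be the largest eigenvalue of the Laplacian matrix L = D − A of G, with μ₁ > 0. Then α(G) ≤ n(μ₁ − δ)/μ₁ (van Dam–Haemers bound). -/

import Mathlib

open Matrix Finset

/-- The independence number of a graph. -/
noncomputable def indepNum {V : Type*} [Fintype V] (G : SimpleGraph V) : ℕ :=
  sSup {n : ℕ | ∃ S : Finset V,
    (∀ u ∈ S, ∀ v ∈ S, ¬ G.Adj u v) ∧ S.card = n}

/-- Rayleigh-type upper bound for a real symmetric matrix. -/
lemma rayleigh_upper_aux {n : Type*} [Fintype n] [DecidableEq n] {A : Matrix n n ℝ}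
    (hA : A.IsHermitian) {μ : ℝ} (hμ : ∀ i, hA.eigenvalues i ≤ μ) (x : n → ℝ) :
    x ⬝ᵥ (A *ᵥ x) ≤ μ * (x ⬝ᵥ x) := by
  have hps : (μ • (1 : Matrix n n ℝ) - A).PosSemidef := by
    have hdiag : (Matrix.diagonal (fun i => μ - hA.eigenvalues i)).PosSemidef :=
      Matrix.PosSemidef.diagonal (fun i => sub_nonneg.2 (hμ i))
    have h := hdiag.mul_mul_conjTranspose_same (hA.eigenvectorUnitary : Matrix n n ℝ)
    have heq : (hA.eigenvectorUnitary : Matrix n n ℝ) *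
        Matrix.diagonal (fun i => μ - hA.eigenvalues i) *
        (hA.eigenvectorUnitary : Matrix n n ℝ)ᴴ = μ • (1 : Matrix n n ℝ) - A := by
      have hd : Matrix.diagonal (fun i => μ - hA.eigenvalues i)
          = μ • (1 : Matrix n n ℝ) - Matrix.diagonal (RCLike.ofReal ∘ hA.eigenvalues) := by
        ext i j
        rcases eq_or_ne i j with rfl | h <;>
          simp [Matrix.diagonal_apply, Matrix.one_apply, h]
      rw [hd, Matrix.mul_sub, Matrix.sub_mul, Matrix.mul_smul, Matrix.mul_one,
        Matrix.smul_mul]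
      have hU : (hA.eigenvectorUnitary : Matrix n n ℝ) *
          (hA.eigenvectorUnitary : Matrix n n ℝ)ᴴ = 1 := by
        have := (Matrix.mem_unitaryGroup_iff).mp hA.eigenvectorUnitary.2
        simpa [Matrix.star_eq_conjTranspose] using this
      rw [hU]
      congr 1
      rw [← Matrix.star_eq_conjTranspose]
      exact hA.spectral_theorem.symm
    rw [heq] at h
    exact h
  have h0 := hps.dotProduct_mulVec_nonneg x
  simp only [star_trivial] at h0
  have : (μ • (1 : Matrix n n ℝ) - A) *ᵥ x = μ • x - A *ᵥ x := by
    rw [Matrix.sub_mulVec, Matrix.smul_mulVec, Matrix.one_mulVec]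
  rw [this, dotProduct_sub, dotProduct_smul] at h0
  have h0' : (0:ℝ) ≤ μ * (x ⬝ᵥ x) - x ⬝ᵥ (A *ᵥ x) := by
    simpa [smul_eq_mul] using h0
  linarith

/-- the van Dam–Haemers bound.  If `μ` is the largest eigenvalue
of the Laplacian `L = D - A` of `G`, `μ > 0`, and `δ` is the minimum degree,
then `α(G) ≤ n (μ - δ) / μ`. -/
theorem vanDam_Haemers_bound {V : Type*} [Fintype V] [DecidableEq V]
    (G : SimpleGraph V) [DecidableRel G.Adj]
    (hL : (G.lapMatrix ℝ).IsHermitian) (μ : ℝ)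
    (hμ : IsGreatest (Set.range hL.eigenvalues) μ) (hμpos : 0 < μ) :
    (indepNum G : ℝ) ≤ (Fintype.card V : ℝ) * (μ - (G.minDegree : ℝ)) / μ := by
  classical
  set L := G.lapMatrix ℝ with hLdef
  set ISet := {n : ℕ | ∃ S : Finset V,
    (∀ u ∈ S, ∀ v ∈ S, ¬ G.Adj u v) ∧ S.card = n} with hISet
  have hbdd : BddAbove ISet := by
    refine ⟨Fintype.card V, ?_⟩
    rintro k ⟨S, -, rfl⟩
    exact S.card_le_univ.trans_eq Finset.card_univ
  have h0mem : (0 : ℕ) ∈ ISet := ⟨∅, by simp⟩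
  have hmem : indepNum G ∈ ISet := Nat.sSup_mem ⟨0, h0mem⟩ hbdd
  obtain ⟨S, hSind, hScard⟩ := hmem
  rcases isEmpty_or_nonempty V with hV | hV
  · have hc : Fintype.card V = 0 := Fintype.card_eq_zero
    have : S = ∅ := Finset.eq_empty_of_isEmpty S
    have hα : indepNum G = 0 := by rw [← hScard, this, Finset.card_empty]
    rw [hα, hc]
    simp
  -- main case
  obtain ⟨v0⟩ := hV
  have hnpos : 0 < (Fintype.card V : ℝ) := by
    have : Nonempty V := ⟨v0⟩
    exact_mod_cast Fintype.card_pos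
  have hαpos : 0 < (indepNum G : ℝ) := by
    have h1 : (1 : ℕ) ∈ ISet := by
      refine ⟨{v0}, ?_, Finset.card_singleton v0⟩
      intro u hu w hw
      simp only [Finset.mem_singleton] at hu hw
      subst hu; subst hw
      exact G.loopless.irrefl _
    have := le_csSup hbdd h1
    exact_mod_cast lt_of_lt_of_le one_pos (by exact_mod_cast this)
  set a : ℝ := (indepNum G : ℝ) with ha
  set nn : ℝ := (Fintype.card V : ℝ) with hnn
  set c : ℝ := a / nn with hc
  set y : V → ℝ := fun v => if v ∈ S then 1 else 0 with hy
  set x : V → ℝ := y - (fun _ => c) with hx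
  -- L *ᵥ x = L *ᵥ y
  have hLx : L *ᵥ x = L *ᵥ y := by
    rw [hx, Matrix.mulVec_sub]
    have : (fun (_ : V) => c) = c • (fun (_ : V) => (1:ℝ)) := by
      funext v; simp
    rw [this, Matrix.mulVec_smul, hLdef, SimpleGraph.lapMatrix_mulVec_const_eq_zero]
    simp
  -- symmetry helper
  have hsymm : ∀ u w : V → ℝ, u ⬝ᵥ (L *ᵥ w) = (L *ᵥ u) ⬝ᵥ w := by
    intro u w
    rw [Matrix.dotProduct_mulVec, ← Matrix.mulVec_transpose,
      (G.isSymm_lapMatrix ℝ).eq]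
  -- (L *ᵥ y) u = deg u for u ∈ S
  have hLy : ∀ u ∈ S, (L *ᵥ y) u = (G.degree u : ℝ) := by
    intro u hu
    rw [hLdef, SimpleGraph.lapMatrix_mulVec_apply]
    have hz : ∑ w ∈ G.neighborFinset u, y w = 0 := by
      refine Finset.sum_eq_zero fun w hw => ?_
      rw [hy]
      simp only
      rw [if_neg]
      intro hwS
      exact hSind u hu w hwS ((SimpleGraph.mem_neighborFinset G u w).1 hw)
    rw [hz, hy]
    simp [hu]
  have hyLy : y ⬝ᵥ (L *ᵥ y) = ∑ u ∈ S, (G.degree u : ℝ) := by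
    rw [dotProduct]
    rw [← Finset.sum_subset (Finset.subset_univ S) (fun v _ hv => by
      simp [hy, if_neg hv])]
    refine Finset.sum_congr rfl fun u hu => ?_
    rw [hLy u hu, hy]
    simp [hu]
  -- x ⬝ᵥ (L *ᵥ x) = y ⬝ᵥ (L *ᵥ y)
  have hxLx : x ⬝ᵥ (L *ᵥ x) = y ⬝ᵥ (L *ᵥ y) := by
    rw [hLx, hx, sub_dotProduct]
    have h1 : (fun (_ : V) => c) ⬝ᵥ (L *ᵥ y) = 0 := by
      have : (fun (_ : V) => c) = c • (fun (_ : V) => (1:ℝ)) := by funext v; simp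
      rw [this, smul_dotProduct, hsymm, hLdef,
        SimpleGraph.lapMatrix_mulVec_const_eq_zero]
      simp
    rw [h1, sub_zero]
  -- x ⬝ᵥ x
  have hsy : ∑ v, y v = a := by
    rw [hy, ha, ← hScard]
    simp [Finset.sum_ite_mem]
  have hxx : x ⬝ᵥ x = a - 2*c*a + c^2 * nn := by
    rw [dotProduct]
    have hterm : ∀ v : V, x v * x v = y v * y v - 2*c*(y v) + c^2 := by
      intro v; rw [hx]; simp only [Pi.sub_apply]; ring
    rw [Finset.sum_congr rfl fun v _ => hterm v]
    rw [Finset.sum_add_distrib, Finset.sum_sub_distrib]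
    have hy2 : ∑ v, y v * y v = a := by
      have : ∀ v, y v * y v = y v := by
        intro v; rw [hy]; simp only; split <;> ring
      rw [Finset.sum_congr rfl fun v _ => this v, hsy]
    have hyc : ∑ v, 2*c*(y v) = 2*c*a := by
      rw [← Finset.mul_sum, hsy]
    have hcc : ∑ _v : V, c^2 = c^2 * nn := by
      rw [Finset.sum_const, hnn, Finset.card_univ, nsmul_eq_mul, mul_comm]
    rw [hy2, hyc, hcc]
  -- lower bound on the quadratic form
  have hdeg : (G.minDegree : ℝ) * a ≤ ∑ u ∈ S, (G.degree u : ℝ) := by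
    have : ∑ u ∈ S, (G.minDegree : ℝ) ≤ ∑ u ∈ S, (G.degree u : ℝ) :=
      Finset.sum_le_sum fun u _ => by exact_mod_cast G.minDegree_le_degree u
    calc (G.minDegree : ℝ) * a = ∑ u ∈ S, (G.minDegree : ℝ) := by
          rw [Finset.sum_const, nsmul_eq_mul, hScard, ha, mul_comm]
      _ ≤ _ := this
  -- Rayleigh
  have hray : x ⬝ᵥ (L *ᵥ x) ≤ μ * (x ⬝ᵥ x) :=
    rayleigh_upper_aux hL (fun i => hμ.2 ⟨i, rfl⟩) x
  have key : (G.minDegree : ℝ) * a ≤ μ * (a - 2*c*a + c^2 * nn) := by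
    rw [← hxx]
    calc (G.minDegree : ℝ) * a ≤ ∑ u ∈ S, (G.degree u : ℝ) := hdeg
      _ = y ⬝ᵥ (L *ᵥ y) := hyLy.symm
      _ = x ⬝ᵥ (L *ᵥ x) := hxLx.symm
      _ ≤ μ * (x ⬝ᵥ x) := hray
  have hcn : c * nn = a := by
    rw [hc]; field_simp
  rw [le_div_iff₀ hμpos]
  have hc2 : c ^ 2 * nn = c * a := by rw [sq, mul_assoc, hcn]
  rw [hc2] at key
  have key2 : (G.minDegree : ℝ) * a ≤ (μ - μ * c) * a := by linear_combination key
  have h2 : (G.minDegree : ℝ) ≤ μ - μ * c := le_of_mul_le_mul_right key2 hαpos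
  have h3 := mul_le_mul_of_nonneg_left h2 hnpos.le
  have h4 : nn * (μ - μ * c) = nn * μ - μ * a := by
    rw [mul_sub]; congr 1; rw [← hcn]; ring
  rw [h4] at h3
  linarith
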